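/- Let w : A × A → [0,∞) be a symmetric weight function on a finite set A with w(x,x) = 0, and assume the weighted graph (A, w) is connected (i.e., between any two points there is a path along edges of positive weight). For x ≠ y, define the effective resistance R(x,y) = ( min{ E(f) : f : A → ℝ, f(x) = 0, f(y) = 1 } )^{−1}, where E(f) = (1/2) Σ_{u,v ∈ A} w(u,v)(f(u) − f(v))², and set R(x,x) = 0. Then R is a metric on A; in particular R satisfies the triangle inequality R(x,z) ≤ R(x,y) + R(y,z). -/

import Mathlib

namespace EffResAux

set_option linter.unusedSectionVars false

variable {V : Type*} [Fintype V] [DecidableEq V]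

/-- Dirichlet energy. -/
noncomputable def En (w : V → V → ℝ) (f : V → ℝ) : ℝ :=
  (1 / 2) * ∑ u, ∑ v, w u v * (f u - f v) ^ 2

/-- Associated bilinear form. -/
noncomputable def Bi (w : V → V → ℝ) (f g : V → ℝ) : ℝ :=
  (1 / 2) * ∑ u, ∑ v, w u v * (f u - f v) * (g u - g v)

/-- Weighted Laplacian. -/
noncomputable def Lap (w : V → V → ℝ) (f : V → ℝ) (a : V) : ℝ :=
  ∑ b, w a b * (f a - f b)

lemma En_nonneg (w : V → V → ℝ) (hw0 : ∀ u v, 0 ≤ w u v) (f : V → ℝ) : 0 ≤ En w f := by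
  unfold En
  have : (0:ℝ) ≤ ∑ u, ∑ v, w u v * (f u - f v) ^ 2 :=
    Finset.sum_nonneg fun u _ => Finset.sum_nonneg fun v _ =>
      mul_nonneg (hw0 u v) (sq_nonneg _)
  linarith

lemma Bi_self (w : V → V → ℝ) (f : V → ℝ) : Bi w f f = En w f := by
  unfold Bi En
  congr 1
  refine Finset.sum_congr rfl fun u _ => Finset.sum_congr rfl fun v _ => by ring

lemma sum_mul_lap (w : V → V → ℝ) (hsymm : ∀ u v, w u v = w v u) (f g : V → ℝ) :
    ∑ a, f a * Lap w g a = Bi w f g := by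
  unfold Lap Bi
  have h1 : ∑ a, f a * ∑ b, w a b * (g a - g b)
      = ∑ a, ∑ b, w a b * f a * (g a - g b) := by
    refine Finset.sum_congr rfl fun a _ => ?_
    rw [Finset.mul_sum]
    exact Finset.sum_congr rfl fun b _ => by ring
  have h2 : ∑ a, ∑ b, w a b * f b * (g a - g b)
      = - ∑ a, ∑ b, w a b * f a * (g a - g b) := by
    rw [Finset.sum_comm, ← Finset.sum_neg_distrib]
    refine Finset.sum_congr rfl fun a _ => ?_
    rw [← Finset.sum_neg_distrib]
    refine Finset.sum_congr rfl fun b _ => ?_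
    rw [hsymm b a]; ring
  have h3 : ∑ u, ∑ v, w u v * (f u - f v) * (g u - g v)
      = ∑ a, ∑ b, w a b * f a * (g a - g b) - ∑ a, ∑ b, w a b * f b * (g a - g b) := by
    rw [← Finset.sum_sub_distrib]
    refine Finset.sum_congr rfl fun a _ => ?_
    rw [← Finset.sum_sub_distrib]
    refine Finset.sum_congr rfl fun b _ => by ring
  rw [h1, h3, h2]; ring

lemma Bi_sq_le (w : V → V → ℝ) (hw0 : ∀ u v, 0 ≤ w u v) (f g : V → ℝ) :
    (Bi w f g) ^ 2 ≤ En w f * En w g := by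
  have key := Finset.sum_mul_sq_le_sq_mul_sq Finset.univ
    (fun p : V × V => Real.sqrt (w p.1 p.2) * (f p.1 - f p.2))
    (fun p : V × V => Real.sqrt (w p.1 p.2) * (g p.1 - g p.2))
  have e1 : ∑ p : V × V, (Real.sqrt (w p.1 p.2) * (f p.1 - f p.2)) *
      (Real.sqrt (w p.1 p.2) * (g p.1 - g p.2))
      = ∑ u, ∑ v, w u v * (f u - f v) * (g u - g v) := by
    rw [Fintype.sum_prod_type]
    refine Finset.sum_congr rfl fun u _ => Finset.sum_congr rfl fun v _ => ?_
    set p : V × V := (u, v) with hp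
    have : Real.sqrt (w p.1 p.2) * Real.sqrt (w p.1 p.2) = w p.1 p.2 :=
      Real.mul_self_sqrt (hw0 p.1 p.2)
    calc Real.sqrt (w p.1 p.2) * (f p.1 - f p.2) * (Real.sqrt (w p.1 p.2) * (g p.1 - g p.2))
        = (Real.sqrt (w p.1 p.2) * Real.sqrt (w p.1 p.2)) * (f p.1 - f p.2) * (g p.1 - g p.2) := by
          ring
      _ = w p.1 p.2 * (f p.1 - f p.2) * (g p.1 - g p.2) := by rw [this]
  have e2 : ∑ p : V × V, (Real.sqrt (w p.1 p.2) * (f p.1 - f p.2)) ^ 2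
      = ∑ u, ∑ v, w u v * (f u - f v) ^ 2 := by
    rw [Fintype.sum_prod_type]
    refine Finset.sum_congr rfl fun u _ => Finset.sum_congr rfl fun v _ => ?_
    rw [mul_pow, Real.sq_sqrt (hw0 u v)]
  have e3 : ∑ p : V × V, (Real.sqrt (w p.1 p.2) * (g p.1 - g p.2)) ^ 2
      = ∑ u, ∑ v, w u v * (g u - g v) ^ 2 := by
    rw [Fintype.sum_prod_type]
    refine Finset.sum_congr rfl fun u _ => Finset.sum_congr rfl fun v _ => ?_
    rw [mul_pow, Real.sq_sqrt (hw0 u v)]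
  rw [e1, e2, e3] at key
  unfold Bi En
  nlinarith [key]

/-- Path lower bound: squared differences are controlled by the energy. -/
lemma diff_sq_le (w : V → V → ℝ) (hw0 : ∀ u v, 0 ≤ w u v) {x y : V}
    (h : Relation.ReflTransGen (fun u v => 0 < w u v) x y) :
    ∃ c : ℝ, 0 ≤ c ∧ ∀ f : V → ℝ, (f x - f y) ^ 2 ≤ c * En w f := by
  induction h with
  | refl => exact ⟨0, le_refl 0, fun f => by simp⟩
  | @tail b c hb hbc ih =>
      obtain ⟨c1, hc1, hf1⟩ := ih
      refine ⟨2 * c1 + 8 / w b c, by positivity, fun f => ?_⟩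
      have hterm : w b c * (f b - f c) ^ 2 ≤ ∑ u, ∑ v, w u v * (f u - f v) ^ 2 := by
        have h1 : w b c * (f b - f c) ^ 2 ≤ ∑ v, w b v * (f b - f v) ^ 2 :=
          Finset.single_le_sum (f := fun v => w b v * (f b - f v) ^ 2)
            (fun v _ => mul_nonneg (hw0 b v) (sq_nonneg _)) (Finset.mem_univ c)
        have h2 : ∑ v, w b v * (f b - f v) ^ 2 ≤ ∑ u, ∑ v, w u v * (f u - f v) ^ 2 :=
          Finset.single_le_sum (f := fun u => ∑ v, w u v * (f u - f v) ^ 2)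
            (fun u _ => Finset.sum_nonneg fun v _ => mul_nonneg (hw0 u v) (sq_nonneg _))
            (Finset.mem_univ b)
        linarith
      have hterm' : w b c * (f b - f c) ^ 2 ≤ 2 * En w f := by
        have : En w f = (1 / 2) * ∑ u, ∑ v, w u v * (f u - f v) ^ 2 := rfl
        rw [this]; linarith
      have hEn : 0 ≤ En w f := En_nonneg w hw0 f
      have hsq : (f b - f c) ^ 2 ≤ 4 / w b c * En w f := by
        rw [div_mul_eq_mul_div, le_div_iff₀ hbc]
        nlinarith [hterm', hEn, hbc]
      have habc : (f x - f c) ^ 2 ≤ 2 * (f x - f b) ^ 2 + 2 * (f b - f c) ^ 2 := by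
        nlinarith [sq_nonneg ((f x - f b) - (f b - f c))]
      have h1 := hf1 f
      have hexp : (2 * c1 + 8 / w b c) * En w f
          = 2 * (c1 * En w f) + 2 * (4 / w b c * En w f) := by ring
      rw [hexp]
      linarith

lemma quad_zero {b c : ℝ} (hc : 0 ≤ c) (h : ∀ t : ℝ, 0 ≤ t * b + t ^ 2 * c) : b = 0 := by
  by_contra hb
  have hpos : (0:ℝ) < 2 * c + 1 := by linarith
  have h1 := h (-b / (2 * c + 1))
  have h2 : -b / (2 * c + 1) * b + (-b / (2 * c + 1)) ^ 2 * c
      = -(b ^ 2 * (c + 1)) / (2 * c + 1) ^ 2 := by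
    field_simp
    ring
  rw [h2] at h1
  have h3 : (0:ℝ) < b ^ 2 * (c + 1) := by positivity
  have h4 : -(b ^ 2 * (c + 1)) / (2 * c + 1) ^ 2 < 0 :=
    div_neg_of_neg_of_pos (by linarith) (by positivity)
  linarith

/-- Expansion of the energy of a perturbation. -/
lemma En_perturb (w : V → V → ℝ) (g χ : V → ℝ) (t : ℝ) :
    En w (fun a => g a + t * χ a) = En w g + 2 * t * Bi w χ g + t ^ 2 * En w χ := by
  unfold En Bi
  have hpt : ∀ u v : V, w u v * ((g u + t * χ u) - (g v + t * χ v)) ^ 2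
      = w u v * (g u - g v) ^ 2 + (2 * t) * (w u v * (χ u - χ v) * (g u - g v))
        + t ^ 2 * (w u v * (χ u - χ v) ^ 2) := fun u v => by ring
  have : ∑ u, ∑ v, w u v * ((g u + t * χ u) - (g v + t * χ v)) ^ 2
      = ∑ u, ∑ v, w u v * (g u - g v) ^ 2
        + (2 * t) * ∑ u, ∑ v, w u v * (χ u - χ v) * (g u - g v)
        + t ^ 2 * ∑ u, ∑ v, w u v * (χ u - χ v) ^ 2 := by
    rw [Finset.mul_sum, Finset.mul_sum, ← Finset.sum_add_distrib, ← Finset.sum_add_distrib]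
    refine Finset.sum_congr rfl fun u _ => ?_
    rw [Finset.mul_sum, Finset.mul_sum, ← Finset.sum_add_distrib, ← Finset.sum_add_distrib]
    exact Finset.sum_congr rfl fun v _ => hpt u v
  rw [this]; ring

/-- Existence of an energy minimizer with values in `[0,1]`. -/
lemma exists_min (w : V → V → ℝ) (hw0 : ∀ u v, 0 ≤ w u v) {x y : V} (hxy : x ≠ y) :
    ∃ g : V → ℝ, g x = 0 ∧ g y = 1 ∧ (∀ v, 0 ≤ g v ∧ g v ≤ 1) ∧
      ∀ f : V → ℝ, f x = 0 → f y = 1 → En w g ≤ En w f := by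
  set K : Set (V → ℝ) :=
    (Set.univ.pi fun _ : V => Set.Icc (0:ℝ) 1) ∩ ({f | f x = 0} ∩ {f | f y = 1}) with hK
  have hKc : IsCompact K := by
    refine IsCompact.inter_right (isCompact_univ_pi fun _ => isCompact_Icc) ?_
    exact IsClosed.inter (isClosed_singleton.preimage (continuous_apply x))
      (isClosed_singleton.preimage (continuous_apply y))
  have hcont : Continuous fun f : V → ℝ => En w f := by
    unfold En
    exact continuous_const.mul (continuous_finset_sum _ fun u _ =>
      continuous_finset_sum _ fun v _ => continuous_const.mul
        (((continuous_apply u).sub (continuous_apply v)).pow 2))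
  have hKne : K.Nonempty := by
    refine ⟨fun v => if v = y then 1 else 0, ?_, ?_, ?_⟩
    · intro v _
      by_cases h : v = y <;> simp [h]
    · simp [hxy]
    · simp
  obtain ⟨g, hgK, hgmin⟩ := hKc.exists_isMinOn hKne hcont.continuousOn
  obtain ⟨hg01, hgx, hgy⟩ := hgK
  have clamp_le : ∀ f : V → ℝ, En w (fun v => max 0 (min (f v) 1)) ≤ En w f := by
    intro f
    unfold En
    have : ∀ u v : V, w u v * (max 0 (min (f u) 1) - max 0 (min (f v) 1)) ^ 2
        ≤ w u v * (f u - f v) ^ 2 := by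
      intro u v
      refine mul_le_mul_of_nonneg_left ?_ (hw0 u v)
      have h1 : |max 0 (min (f u) 1) - max 0 (min (f v) 1)| ≤ |min (f u) 1 - min (f v) 1| := by
        rw [max_comm 0 (min (f u) 1), max_comm 0 (min (f v) 1)]
        exact abs_max_sub_max_le_abs _ _ _
      have h2 : |min (f u) 1 - min (f v) 1| ≤ |f u - f v| := by
        have := abs_min_sub_min_le_max (f u) 1 (f v) 1
        simpa using this
      calc (max 0 (min (f u) 1) - max 0 (min (f v) 1)) ^ 2
          = |max 0 (min (f u) 1) - max 0 (min (f v) 1)| ^ 2 := (sq_abs _).symm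
        _ ≤ |f u - f v| ^ 2 := by
            have := h1.trans h2
            exact pow_le_pow_left₀ (abs_nonneg _) this 2
        _ = (f u - f v) ^ 2 := sq_abs _
    have := Finset.sum_le_sum fun u (_ : u ∈ Finset.univ) =>
      Finset.sum_le_sum fun v (_ : v ∈ Finset.univ) => this u v
    linarith
  refine ⟨g, hgx, hgy, fun v => (hg01 v (Set.mem_univ v) : g v ∈ Set.Icc (0:ℝ) 1), ?_⟩
  intro f hfx hfy
  have hmem : (fun v => max 0 (min (f v) 1)) ∈ K := by
    refine ⟨fun v _ => ?_, ?_, ?_⟩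
    · constructor
      · exact le_max_left 0 _
      · exact max_le (by norm_num) (min_le_right _ _)
    · show max 0 (min (f x) 1) = 0
      rw [hfx]; norm_num
    · show max 0 (min (f y) 1) = 1
      rw [hfy]; norm_num
  exact le_trans (hgmin hmem) (clamp_le f)

/-- Euler–Lagrange equations for a minimizer. -/
lemma lap_of_min (w : V → V → ℝ) (hw0 : ∀ u v, 0 ≤ w u v) (hsymm : ∀ u v, w u v = w v u)
    {x y : V} (hxy : x ≠ y) (g : V → ℝ) (hgx : g x = 0) (hgy : g y = 1)
    (hmin : ∀ f : V → ℝ, f x = 0 → f y = 1 → En w g ≤ En w f) :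
    ∀ v, Lap w g v = (if v = y then En w g else 0) - (if v = x then En w g else 0) := by
  have hharm : ∀ v, v ≠ x → v ≠ y → Lap w g v = 0 := by
    intro v hvx hvy
    set χ : V → ℝ := fun a => if a = v then 1 else 0 with hχ
    have hquad : ∀ t : ℝ, 0 ≤ t * (2 * Bi w χ g) + t ^ 2 * En w χ := by
      intro t
      have hfx : (fun a => g a + t * χ a) x = 0 := by
        show g x + t * χ x = 0
        have hx : χ x = 0 := if_neg (Ne.symm hvx)
        rw [hgx, hx]; ring
      have hfy : (fun a => g a + t * χ a) y = 1 := by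
        show g y + t * χ y = 1
        have hy : χ y = 0 := if_neg (Ne.symm hvy)
        rw [hgy, hy]; ring
      have := hmin (fun a => g a + t * χ a) hfx hfy
      rw [En_perturb w g χ t] at this
      linarith
    have hb0 : 2 * Bi w χ g = 0 := quad_zero (En_nonneg w hw0 χ) hquad
    have hBL : Bi w χ g = Lap w g v := by
      rw [← sum_mul_lap w hsymm χ g]
      have : ∀ a, χ a * Lap w g a = if a = v then Lap w g a else 0 := by
        intro a
        by_cases h : a = v <;> simp [hχ, h]
      rw [Finset.sum_congr rfl fun a _ => this a, Finset.sum_ite_eq' Finset.univ v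
        (fun a => Lap w g a)]
      simp
    rw [← hBL]
    linarith
  have hsum : ∑ a, g a * Lap w g a = En w g := by
    rw [sum_mul_lap w hsymm g g, Bi_self]
  have hsum2 : ∑ a, g a * Lap w g a = Lap w g y := by
    have : ∀ a, g a * Lap w g a = if a = y then Lap w g y else 0 := by
      intro a
      by_cases hay : a = y
      · subst hay; rw [hgy, one_mul, if_pos rfl]
      · by_cases hax : a = x
        · subst hax; rw [hgx, zero_mul, if_neg hay]
        · rw [hharm a hax hay, mul_zero, if_neg hay]
    rw [Finset.sum_congr rfl fun a _ => this a,
      Finset.sum_ite_eq' Finset.univ y (fun _ => Lap w g y)]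
    simp
  have hLy : Lap w g y = En w g := by rw [← hsum2, hsum]
  have hsum3 : ∑ a, Lap w g a = 0 := by
    have h1 : ∑ a, (1:ℝ) * Lap w g a = Bi w (fun _ => (1:ℝ)) g :=
      sum_mul_lap w hsymm (fun _ => 1) g
    have h2 : Bi w (fun _ => (1:ℝ)) g = 0 := by
      unfold Bi
      have : ∀ u v : V, w u v * ((1:ℝ) - 1) * (g u - g v) = 0 := fun u v => by ring
      rw [Finset.sum_congr rfl fun u _ => Finset.sum_congr rfl fun v _ => this u v]
      simp
    simpa using h1.trans h2
  have hsum4 : ∑ a, Lap w g a = Lap w g x + Lap w g y := by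
    have : ∀ a, Lap w g a = (if a = x then Lap w g x else 0) + (if a = y then Lap w g y else 0) := by
      intro a
      by_cases hax : a = x
      · subst hax
        rw [if_pos rfl, if_neg hxy, add_zero]
      · by_cases hay : a = y
        · subst hay; rw [if_neg hax, if_pos rfl, zero_add]
        · rw [hharm a hax hay, if_neg hax, if_neg hay, add_zero]
    rw [Finset.sum_congr rfl fun a _ => this a, Finset.sum_add_distrib,
      Finset.sum_ite_eq' Finset.univ x (fun _ => Lap w g x),
      Finset.sum_ite_eq' Finset.univ y (fun _ => Lap w g y)]
    simp
  have hLx : Lap w g x = -En w g := by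
    rw [hsum4, hLy] at hsum3; linarith
  intro v
  by_cases hvy : v = y
  · subst hvy
    rw [if_pos rfl, if_neg (Ne.symm hxy), hLy, sub_zero]
  · by_cases hvx : v = x
    · subst hvx
      rw [if_neg hvy, if_pos rfl, hLx, zero_sub]
    · rw [hharm v hvx hvy, if_neg hvy, if_neg hvx, sub_zero]

end EffResAux

open EffResAux in
/-- Effective resistance of a connected finite weighted network is a metric.
Here `R x y = (min{E(f) : f x = 0, f y = 1})⁻¹` for `x ≠ y`, with
`E(f) = (1/2) ∑_{u,v} w u v (f u - f v)²`, and `R x x = 0`. -/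
theorem effective_resistance_is_metric {V : Type*} [Fintype V] [DecidableEq V]
    (w : V → V → ℝ)
    (hw0 : ∀ u v, 0 ≤ w u v) (hsymm : ∀ u v, w u v = w v u) (hdiag : ∀ u, w u u = 0)
    (hconn : ∀ x y : V, Relation.ReflTransGen (fun u v => 0 < w u v) x y)
    (R : V → V → ℝ)
    (hR : ∀ x y, R x y = if x = y then 0 else
      (sInf {e : ℝ | ∃ f : V → ℝ, f x = 0 ∧ f y = 1 ∧
        e = (1 / 2) * ∑ u, ∑ v, w u v * (f u - f v) ^ 2})⁻¹) :
    (∀ x y, 0 ≤ R x y) ∧ (∀ x y, R x y = R y x) ∧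
    (∀ x y, R x y = 0 ↔ x = y) ∧ (∀ x y z, R x z ≤ R x y + R y z) := by
  classical
  set S : V → V → Set ℝ := fun x y =>
    {e : ℝ | ∃ f : V → ℝ, f x = 0 ∧ f y = 1 ∧
      e = (1 / 2) * ∑ u, ∑ v, w u v * (f u - f v) ^ 2} with hS
  have hSE : ∀ x y : V, S x y = {e : ℝ | ∃ f : V → ℝ, f x = 0 ∧ f y = 1 ∧ e = En w f} := by
    intro x y; rfl
  have hSne : ∀ x y : V, x ≠ y → (S x y).Nonempty := by
    intro x y hxy
    exact ⟨_, ⟨fun v => if v = y then 1 else 0, by simp [hxy], by simp, rfl⟩⟩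
  have hbdd : ∀ x y : V, BddBelow (S x y) := by
    intro x y
    refine ⟨0, fun e he => ?_⟩
    obtain ⟨f, _, _, rfl⟩ := he
    exact En_nonneg w hw0 f
  -- positive lower bound on the infimum
  have hmpos : ∀ x y : V, x ≠ y → 0 < sInf (S x y) := by
    intro x y hxy
    obtain ⟨c, hc0, hcf⟩ := diff_sq_le w hw0 (hconn x y)
    have hcpos : 0 < c := by
      rcases hc0.lt_or_eq with h | h
      · exact h
      · exfalso
        have := hcf (fun v => if v = y then 1 else 0)
        simp [hxy, ← h] at this
        nlinarith
    refine lt_of_lt_of_le (by positivity : (0:ℝ) < 1 / c) (le_csInf (hSne x y hxy) ?_)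
    rintro e ⟨f, hfx, hfy, rfl⟩
    have h1 := hcf f
    rw [hfx, hfy] at h1
    have h2 : (1:ℝ) ≤ c * En w f := by nlinarith
    rw [div_le_iff₀ hcpos]
    show (1:ℝ) ≤ (1 / 2) * (∑ u, ∑ v, w u v * (f u - f v) ^ 2) * c
    calc (1:ℝ) ≤ c * En w f := h2
      _ = (1 / 2) * (∑ u, ∑ v, w u v * (f u - f v) ^ 2) * c := by unfold En; ring
  have hRnonneg : ∀ x y, 0 ≤ R x y := by
    intro x y
    rw [hR x y]
    by_cases h : x = y
    · simp [h]
    · rw [if_neg h]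
      exact inv_nonneg.mpr (le_of_lt (hmpos x y h))
  have hRsymm : ∀ x y, R x y = R y x := by
    intro x y
    by_cases h : x = y
    · rw [h]
    · have hset : S x y = S y x := by
        ext e
        constructor
        all_goals
          rintro ⟨f, hfx, hfy, rfl⟩
          refine ⟨fun v => 1 - f v, by simp [hfy], by simp [hfx], ?_⟩
          congr 1
          exact Finset.sum_congr rfl fun u _ => Finset.sum_congr rfl fun v _ => by ring
      rw [hR x y, hR y x, if_neg h, if_neg (Ne.symm h)]
      exact congrArg _ (congrArg _ hset)
  have hRzero : ∀ x y, R x y = 0 ↔ x = y := by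
    intro x y
    constructor
    · intro h
      by_contra hxy
      rw [hR x y, if_neg hxy] at h
      exact absurd h (ne_of_gt (inv_pos.mpr (hmpos x y hxy)))
    · intro h; rw [hR x y, if_pos h]
  refine ⟨hRnonneg, hRsymm, hRzero, ?_⟩
  intro x y z
  by_cases hxz : x = z
  · rw [hR x z, if_pos hxz]
    exact add_nonneg (hRnonneg x y) (hRnonneg y z)
  by_cases hxy : x = y
  · subst hxy
    rw [(hRzero x x).mpr rfl]
    simp
  by_cases hyz : y = z
  · subst hyz
    rw [(hRzero y y).mpr rfl]
    simp
  -- the genuinely triangular case: x, y, z pairwise distinct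
  obtain ⟨g1, hg1x, hg1y, hg1b, hg1min⟩ := exists_min w hw0 hxy
  obtain ⟨g2, hg2y, hg2z, hg2b, hg2min⟩ := exists_min w hw0 hyz
  set m1 := En w g1 with hm1
  set m2 := En w g2 with hm2
  have hinf1 : sInf (S x y) = m1 := by
    refine le_antisymm (csInf_le (hbdd x y) ⟨g1, hg1x, hg1y, rfl⟩) ?_
    refine le_csInf (hSne x y hxy) ?_
    rintro e ⟨f, hfx, hfy, rfl⟩
    exact hg1min f hfx hfy
  have hinf2 : sInf (S y z) = m2 := by
    refine le_antisymm (csInf_le (hbdd y z) ⟨g2, hg2y, hg2z, rfl⟩) ?_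
    refine le_csInf (hSne y z hyz) ?_
    rintro e ⟨f, hfy, hfz, rfl⟩
    exact hg2min f hfy hfz
  have hm1pos : 0 < m1 := hinf1 ▸ hmpos x y hxy
  have hm2pos : 0 < m2 := hinf2 ▸ hmpos y z hyz
  have hLap1 := lap_of_min w hw0 hsymm hxy g1 hg1x hg1y hg1min
  have hLap2 := lap_of_min w hw0 hsymm hyz g2 hg2y hg2z hg2min
  set u : V → ℝ := fun v => g1 v / m1 + g2 v / m2 with hu
  have hLapu : ∀ v, Lap w u v = (if v = z then 1 else 0) - (if v = x then 1 else 0) := by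
    intro v
    have hlin : Lap w u v = Lap w g1 v / m1 + Lap w g2 v / m2 := by
      unfold Lap
      rw [Finset.sum_div, Finset.sum_div, ← Finset.sum_add_distrib]
      refine Finset.sum_congr rfl fun b _ => ?_
      show w v b * ((g1 v / m1 + g2 v / m2) - (g1 b / m1 + g2 b / m2))
        = w v b * (g1 v - g1 b) / m1 + w v b * (g2 v - g2 b) / m2
      field_simp
      ring
    rw [hlin, hLap1 v, hLap2 v]
    by_cases hvx : v = x
    · subst hvx
      rw [if_neg hxy, if_pos rfl, if_neg hxz, if_neg hxy, if_neg hxz, if_pos rfl]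
      field_simp
      rw [← hm1]
      ring
    · by_cases hvy : v = y
      · subst hvy
        rw [if_pos rfl, if_neg (Ne.symm hxy), if_neg hyz, if_pos rfl,
          if_neg hyz, if_neg (Ne.symm hxy)]
        field_simp
        rw [← hm1, ← hm2]
        ring
      · by_cases hvz : v = z
        · subst hvz
          rw [if_neg (Ne.symm hyz), if_neg (Ne.symm hxz), if_pos rfl,
            if_neg (Ne.symm hyz), if_pos rfl, if_neg (Ne.symm hxz)]
          field_simp
          rw [← hm2]
          ring
        · rw [if_neg hvy, if_neg hvx, if_neg hvz, if_neg hvy, if_neg hvz, if_neg hvx]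
          simp
  have hpair : ∀ f : V → ℝ, Bi w f u = f z - f x := by
    intro f
    rw [← sum_mul_lap w hsymm f u]
    have : ∀ a, f a * Lap w u a
        = (if a = z then f z else 0) - (if a = x then f x else 0) := by
      intro a
      rw [hLapu a]
      by_cases haz : a = z
      · subst haz
        rw [if_pos rfl, if_pos rfl, if_neg (Ne.symm hxz), if_neg (Ne.symm hxz)]
        ring
      · by_cases hax : a = x
        · subst hax
          rw [if_neg haz, if_pos rfl, if_neg haz, if_pos rfl]
          ring
        · rw [if_neg haz, if_neg hax, if_neg haz, if_neg hax]
          ring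
    rw [Finset.sum_congr rfl fun a _ => this a, Finset.sum_sub_distrib,
      Finset.sum_ite_eq' Finset.univ z (fun _ => f z),
      Finset.sum_ite_eq' Finset.univ x (fun _ => f x)]
    simp
  have hEu : En w u = u z - u x := by
    rw [← Bi_self, ← sum_mul_lap w hsymm u u]
    rw [sum_mul_lap w hsymm u u, hpair u]
  have hubound : u z - u x ≤ 1 / m1 + 1 / m2 := by
    have h1 : u z = g1 z / m1 + 1 / m2 := by rw [hu]; simp [hg2z]
    have h2 : u x = g2 x / m2 := by rw [hu]; simp [hg1x]
    have h3 : g1 z / m1 ≤ 1 / m1 := (div_le_div_iff_of_pos_right hm1pos).mpr (hg1b z).2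
    have h4 : 0 ≤ g2 x / m2 := div_nonneg (hg2b x).1 (le_of_lt hm2pos)
    rw [h1, h2]
    linarith
  have hEupos : 0 < En w u := by
    have hf0 : ∀ v : V, (fun v => if v = z then (1:ℝ) else 0) v = _ := fun v => rfl
    set f0 : V → ℝ := fun v => if v = z then 1 else 0 with hf0'
    have h1 : Bi w f0 u = 1 := by
      rw [hpair f0]
      simp [hf0', hxz]
    have h2 := Bi_sq_le w hw0 f0 u
    rw [h1] at h2
    have hEf0 : 0 ≤ En w f0 := En_nonneg w hw0 f0
    nlinarith [En_nonneg w hw0 u]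
  have hlb : (En w u)⁻¹ ≤ sInf (S x z) := by
    refine le_csInf (hSne x z hxz) ?_
    rintro e ⟨f, hfx, hfz, rfl⟩
    have h1 : Bi w f u = 1 := by rw [hpair f, hfz, hfx]; ring
    have h2 := Bi_sq_le w hw0 f u
    rw [h1] at h2
    norm_num at h2
    show (En w u)⁻¹ ≤ En w f
    rw [inv_eq_one_div, div_le_iff₀ hEupos]
    linarith
  have hfinal : R x z ≤ En w u := by
    rw [hR x z, if_neg hxz]
    have hpos := hmpos x z hxz
    calc (sInf (S x z))⁻¹ ≤ ((En w u)⁻¹)⁻¹ := by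
          apply inv_anti₀ (inv_pos.mpr hEupos) hlb
      _ = En w u := inv_inv _
  have : R x y + R y z = 1 / m1 + 1 / m2 := by
    rw [hR x y, hR y z, if_neg hxy, if_neg hyz, hinf1, hinf2, one_div, one_div]
  rw [this]
  calc R x z ≤ En w u := hfinal
    _ = u z - u x := hEu
    _ ≤ 1 / m1 + 1 / m2 := hubound
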